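/- Let C, A, B be points with ∠ACB ≤ 2π/k (k ≥ 14 an integer), and let S be the set consisting of A, B, and all points of a given finite point set P lying in the interior of triangle ABC, where |CA| ≤ |CX| for every X ∈ S. If N₀ = A, N₁, …, N_s = B are the vertices of the convex hull of S listed in angular order around C, then |CN_i| ≤ |CN_{i+1}| for all 0 ≤ i ≤ s−1. -/

import Mathlib

open Real EuclideanGeometry

set_option maxHeartbeats 1000000

open scoped RealInnerProductSpace

private lemma nonneg_of_mul_nonneg' {c X : ℝ} (hc : 0 < c) (h : 0 ≤ c * X) : 0 ≤ X := by
  by_contra h'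
  push_neg at h'
  nlinarith

private lemma sq_le_imp {a b : ℝ} (h : a^2 ≤ b^2) (hb : 0 ≤ b) : a ≤ b := by
  nlinarith [sq_nonneg (a - b), sq_nonneg (a + b)]

private lemma key_cross {u v x y m p : ℝ} (hu : 0 ≤ u) (hx : 0 ≤ x)
    (hy : 0 ≤ y) (hm : 0 ≤ m) (hq : x^2 + y^2 = m^2) (hp : p^2 = u^2 + v^2)
    (hmp : m ≤ p) (h3 : x*p ≤ u*m) : v*x ≤ u*y := by
  have hp0 : 0 ≤ p := hm.trans hmp
  have h1 : (x*p)*(x*p) ≤ (u*m)*(u*m) :=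
    mul_self_le_mul_self (mul_nonneg hx hp0) h3
  have e1 : x^2*p^2 = x^2*u^2 + x^2*v^2 := by linear_combination x^2*hp
  have e2 : u^2*m^2 = u^2*x^2 + u^2*y^2 := by linear_combination (-(u^2))*hq
  have h2 : (v*x)^2 ≤ (u*y)^2 := by nlinarith [h1, e1, e2]
  exact sq_le_imp h2 (mul_nonneg hu hy)

private lemma key_G2 {u v x y r m p : ℝ} (hu : 0 ≤ u) (hv : 0 ≤ v) (hx : 0 ≤ x) (hy : 0 ≤ y)
    (hr : 0 ≤ r) (hrm : r ≤ m) (hmp : m ≤ p)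
    (hq : x^2 + y^2 = m^2) (hP : p^2 = u^2 + v^2) (h3 : x*p ≤ u*m) :
    r*(y - v) ≤ u*y - v*x := by
  have hm : 0 ≤ m := hr.trans hrm
  have hcross : v*x ≤ u*y := key_cross hu hx hy hm hq hP hmp h3
  rcases le_or_gt y v with hyv | hyv
  · nlinarith [mul_nonneg hr (sub_nonneg.2 hyv)]
  · have hym : y ≤ m := sq_le_imp (by nlinarith [sq_nonneg x]) hm
    have hvm : v ≤ m := hyv.le.trans hym
    have hvm2 : v^2 ≤ m^2 := by nlinarith [mul_self_le_mul_self hv hvm]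
    have hw0 : 0 ≤ Real.sqrt (m^2 - v^2) := Real.sqrt_nonneg _
    have hw2 : (Real.sqrt (m^2 - v^2))^2 = m^2 - v^2 := Real.sq_sqrt (by linarith)
    obtain ⟨w, hw0, hw2⟩ : ∃ w : ℝ, 0 ≤ w ∧ w^2 = m^2 - v^2 := ⟨_, hw0, hw2⟩
    have hmm : m^2 ≤ p^2 := by nlinarith [mul_self_le_mul_self hm hmp]
    have huw : w ≤ u := sq_le_imp (by linarith) hu
    have h5 : w*x ≤ m^2 - y*v := by
      refine sq_le_imp ?_ (by nlinarith [mul_le_mul hym hvm hv hm])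
      have key5 : (m^2 - y*v)^2 - (w*x)^2 = m^2*(y-v)^2 := by
        linear_combination (-(x^2))*hw2 + (-(m^2-v^2))*hq
      nlinarith [key5, sq_nonneg (m*(y-v))]
    have h10 : 0 ≤ w*y - v*x := by
      have key10 : (w*y)^2 - (v*x)^2 = m^2*(y^2 - v^2) := by
        linear_combination (y^2)*hw2 + (-(v^2))*hq
      have hy2 : v^2 ≤ y^2 := by nlinarith [mul_self_le_mul_self hv hyv.le]
      have hsq : (v*x)^2 ≤ (w*y)^2 := by
        nlinarith [key10, mul_le_mul_of_nonneg_left hy2 (sq_nonneg m)]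
      linarith [sq_le_imp hsq (mul_nonneg hw0 hy)]
    have h8 : m*(y-v) ≤ w*y - v*x := by
      refine sq_le_imp ?_ h10
      have key8 : (w*y - v*x)^2 - (m*(y-v))^2 = 2*(v*y)*(m^2 - y*v - w*x) := by
        linear_combination (y^2)*hw2 + (v^2)*hq
      nlinarith [key8, mul_nonneg (mul_nonneg hv hy) (sub_nonneg.2 h5)]
    have t1 : 0 ≤ (u - w)*y := mul_nonneg (sub_nonneg.2 huw) hy
    have t2 : 0 ≤ (m - r)*(y - v) := mul_nonneg (sub_nonneg.2 hrm) (sub_nonneg.2 hyv.le)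
    nlinarith [t1, t2, h8]

private lemma key_G1 {u v x y B1 B2 r : ℝ} (hy : 0 ≤ y) (hv : 0 ≤ v)
    (hB2 : 0 ≤ B2)
    (hcross : v*x ≤ u*y) (hKEY : r*(y - v) ≤ u*y - v*x) (hux : x ≤ u)
    (hcp : B1*v ≤ B2*u) (hchq : (x - r)*B2 + r*y ≤ y*B1)
    (hvB : v ≤ B2) (hyB : y ≤ B2) :
    u*y - v*x ≤ B2*(u-x) + B1*(y-v) := by
  rcases le_or_gt y v with hyv | hyv
  · rcases eq_or_lt_of_le hv with hv0 | hv0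
    · have hy0 : y = 0 := le_antisymm (hyv.trans hv0.symm.le) hy
      rw [hy0, ← hv0]
      nlinarith [mul_nonneg hB2 (sub_nonneg.2 hux)]
    · have keyid : v * (B2*(u-x) + B1*(y-v) - (u*y - v*x))
          = (B2-v)*(u*y-v*x) + (v-y)*(B2*u-B1*v) := by ring
      have t1 := mul_nonneg (sub_nonneg.2 hvB) (sub_nonneg.2 hcross)
      have t2 := mul_nonneg (sub_nonneg.2 hyv) (sub_nonneg.2 hcp)
      have h0 : 0 ≤ v * (B2*(u-x) + B1*(y-v) - (u*y - v*x)) := by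
        rw [keyid]; linarith
      linarith [nonneg_of_mul_nonneg' hv0 h0]
  · have hy0 : 0 < y := lt_of_le_of_lt hv hyv
    have keyid : y * (B2*(u-x) + B1*(y-v) - (u*y - v*x))
        = (B2-y)*((u*y-v*x) - r*(y-v)) + (y-v)*(y*B1 - ((x-r)*B2 + r*y)) := by ring
    have t1 := mul_nonneg (sub_nonneg.2 hyB) (sub_nonneg.2 hKEY)
    have t2 := mul_nonneg (sub_nonneg.2 hyv.le) (sub_nonneg.2 hchq)
    have h0 : 0 ≤ y * (B2*(u-x) + B1*(y-v) - (u*y - v*x)) := by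
      rw [keyid]; linarith
    linarith [nonneg_of_mul_nonneg' hy0 h0]

private lemma coeff_main {ra rb Sv a1 b1 a2 b2 rp rq : ℝ}
    (hra : 0 < ra) (hSv : 0 ≤ Sv) (hcs : Sv^2 < ra^2 * rb^2)
    (ha1 : 0 ≤ a1) (hb1 : 0 ≤ b1) (hs1 : a1 + b1 ≤ 1)
    (ha2 : 0 ≤ a2) (hb2 : 0 ≤ b2) (hs2 : a2 + b2 < 1)
    (hrq : ra ≤ rq) (hqp : rq ≤ rp)
    (hrp2 : rp^2 = a1^2*ra^2 + 2*a1*b1*Sv + b1^2*rb^2)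
    (hrq2 : rq^2 = a2^2*ra^2 + 2*a2*b2*Sv + b2^2*rb^2)
    (h3 : (a2*ra^2 + b2*Sv) * rp ≤ (a1*ra^2 + b1*Sv) * rq) :
    ∃ l mu nu : ℝ, 0 ≤ l ∧ 0 ≤ mu ∧ 0 ≤ nu ∧ l + mu + nu = 1 ∧
      a1 = l + mu*a2 ∧ b1 = mu*b2 + nu := by
  have hrq0 : 0 < rq := lt_of_lt_of_le hra hrq
  have hrp0 : 0 < rp := lt_of_lt_of_le hrq0 hqp
  obtain ⟨d, hd0, hd2⟩ : ∃ d:ℝ, 0 < d ∧ d^2 = ra^2*rb^2 - Sv^2 :=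
    ⟨Real.sqrt _, Real.sqrt_pos.2 (by linarith), Real.sq_sqrt (by linarith)⟩
  have hu : 0 ≤ a1*ra^2 + b1*Sv :=
    add_nonneg (mul_nonneg ha1 (sq_nonneg ra)) (mul_nonneg hb1 hSv)
  have hx : 0 ≤ a2*ra^2 + b2*Sv :=
    add_nonneg (mul_nonneg ha2 (sq_nonneg ra)) (mul_nonneg hb2 hSv)
  have hv : 0 ≤ b1*d := mul_nonneg hb1 hd0.le
  have hy : 0 ≤ b2*d := mul_nonneg hb2 hd0.le
  have hq' : (a2*ra^2 + b2*Sv)^2 + (b2*d)^2 = (ra*rq)^2 := by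
    linear_combination b2^2*hd2 - ra^2*hrq2
  have hp' : (ra*rp)^2 = (a1*ra^2 + b1*Sv)^2 + (b1*d)^2 := by
    linear_combination (-(b1^2))*hd2 + ra^2*hrp2
  have h3' : (a2*ra^2 + b2*Sv)*(ra*rp) ≤ (a1*ra^2 + b1*Sv)*(ra*rq) := by
    linarith [mul_le_mul_of_nonneg_left h3 hra.le]
  have hrm : ra^2 ≤ ra*rq := by
    linarith [mul_le_mul_of_nonneg_left hrq hra.le]
  have hmp : ra*rq ≤ ra*rp := mul_le_mul_of_nonneg_left hqp hra.le
  have hkey2 := key_G2 hu hv hx hy (sq_nonneg ra) hrm hmp hq' hp' h3'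
  have hfac : 0 < ra^2*d := by positivity
  have hG2 : b2 ≤ b1 + (a1*b2 - a2*b1) := by
    have h0 : 0 ≤ (ra^2*d) * ((b1 + (a1*b2 - a2*b1)) - b2) := by linarith [hkey2]
    linarith [nonneg_of_mul_nonneg' hfac h0]
  have hxu : (a2*ra^2 + b2*Sv) ≤ (a1*ra^2 + b1*Sv) := by
    have h4 : (a2*ra^2 + b2*Sv)*rq ≤ (a2*ra^2 + b2*Sv)*rp := mul_le_mul_of_nonneg_left hqp hx
    exact le_of_mul_le_mul_right (by linarith) hrq0
  have hcross' : (b1*d)*(a2*ra^2 + b2*Sv) ≤ (a1*ra^2 + b1*Sv)*(b2*d) :=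
    key_cross hu hx hy (by positivity) hq' hp' hmp h3'
  have hb1le : b1 ≤ 1 := by linarith
  have hb2le : b2 ≤ 1 := by linarith
  have hcp : Sv*(b1*d) ≤ d*(a1*ra^2 + b1*Sv) := by
    linarith [mul_nonneg (mul_nonneg ha1 hd0.le) (sq_nonneg ra)]
  have hchq : ((a2*ra^2 + b2*Sv) - ra^2)*d + ra^2*(b2*d) ≤ (b2*d)*Sv := by
    linarith [mul_nonneg (mul_nonneg hd0.le (sq_nonneg ra)) (by linarith : (0:ℝ) ≤ 1 - a2 - b2)]
  have hvB : b1*d ≤ d := by linarith [mul_nonneg hd0.le (by linarith : (0:ℝ) ≤ 1 - b1)]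
  have hyB : b2*d ≤ d := by linarith [mul_nonneg hd0.le (by linarith : (0:ℝ) ≤ 1 - b2)]
  have hkey1 := key_G1 hy hv hd0.le hcross' hkey2 hxu hcp hchq hvB hyB
  have hG1 : a2 + (a1*b2 - a2*b1) ≤ a1 := by
    have h0 : 0 ≤ (ra^2*d) * (a1 - a2 - (a1*b2 - a2*b1)) := by linarith [hkey1]
    linarith [nonneg_of_mul_nonneg' hfac h0]
  have hden : 0 < 1 - a2 - b2 := by linarith
  refine ⟨a1 - ((1-a1-b1)/(1-a2-b2))*a2, (1-a1-b1)/(1-a2-b2),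
    b1 - ((1-a1-b1)/(1-a2-b2))*b2, ?_, ?_, ?_, ?_, by ring, by ring⟩
  · rw [sub_nonneg, div_mul_eq_mul_div, div_le_iff₀ hden]
    nlinarith [hG1]
  · exact div_nonneg (by linarith) hden.le
  · rw [sub_nonneg, div_mul_eq_mul_div, div_le_iff₀ hden]
    nlinarith [hG2]
  · field_simp
    ring

private lemma tri_coeff {V : Type*} [AddCommGroup V] [Module ℝ V] {A B C x : V}
    (h : x ∈ convexHull ℝ ({A, B, C} : Set V)) :
    ∃ a b : ℝ, 0 ≤ a ∧ 0 ≤ b ∧ a + b ≤ 1 ∧ x = a • A + b • B + (1 - a - b) • C := by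
  rw [show ({A, B, C} : Set V) = insert A {B, C} from rfl,
    convexHull_insert ⟨B, by simp⟩, mem_convexJoin] at h
  obtain ⟨a, ha, z, hz, hx⟩ := h
  rw [Set.mem_singleton_iff] at ha
  subst ha
  rw [convexHull_pair] at hz
  obtain ⟨c, e, hc, he, hce, H⟩ := hx
  obtain ⟨f, g, hf, hg, hfg, Hz⟩ := hz
  refine ⟨c, e*f, hc, mul_nonneg he hf, by nlinarith, ?_⟩
  have hgg : 1 - c - e*f = e*g := by nlinarith
  rw [hgg, ← H, ← Hz]
  module

private lemma comb_mem {V : Type*} [AddCommGroup V] [Module ℝ V] {X Y Z : V} {l m n : ℝ}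
    (hl : 0 ≤ l) (hm : 0 ≤ m) (hn : 0 ≤ n) (hs : l + m + n = 1) :
    l • X + m • Y + n • Z ∈ convexHull ℝ ({X, Y, Z} : Set V) := by
  have hX : X ∈ convexHull ℝ ({X, Y, Z} : Set V) := subset_convexHull ℝ _ (by simp)
  have hY : Y ∈ convexHull ℝ ({X, Y, Z} : Set V) := subset_convexHull ℝ _ (by simp)
  have hZ : Z ∈ convexHull ℝ ({X, Y, Z} : Set V) := subset_convexHull ℝ _ (by simp)
  have hconv : Convex ℝ (convexHull ℝ ({X, Y, Z} : Set V)) := convex_convexHull ℝ _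
  by_cases hmn : m + n = 0
  · have hm0 : m = 0 := le_antisymm (by linarith) hm
    have hn0 : n = 0 := le_antisymm (by linarith) hn
    have hl1 : l = 1 := by linarith
    rw [hm0, hn0, hl1]
    simpa using hX
  · have hmn0 : 0 < m + n := lt_of_le_of_ne (add_nonneg hm hn) (Ne.symm hmn)
    have hW : (m/(m+n)) • Y + (n/(m+n)) • Z ∈ convexHull ℝ ({X, Y, Z} : Set V) :=
      hconv hY hZ (div_nonneg hm hmn0.le) (div_nonneg hn hmn0.le) (by field_simp)
    have hXW := hconv hX hW hl hmn0.le (by linarith)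
    have heq : l • X + (m+n) • ((m/(m+n)) • Y + (n/(m+n)) • Z) = l • X + m • Y + n • Z := by
      match_scalars <;> field_simp
    rwa [heq] at hXW

private lemma interior_coeff {A B C x : EuclideanSpace ℝ (Fin 2)}
    (h : x ∈ interior (convexHull ℝ ({A, B, C} : Set (EuclideanSpace ℝ (Fin 2)))))
    (hx : x ≠ C) :
    ∃ a b : ℝ, 0 ≤ a ∧ 0 ≤ b ∧ a + b < 1 ∧ x = a • A + b • B + (1 - a - b) • C := by
  rw [mem_interior] at h
  obtain ⟨t, hts, hto, hxt⟩ := h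
  obtain ⟨ε, hε, hball⟩ := Metric.isOpen_iff.mp hto x hxt
  have hxC : 0 < ‖x - C‖ := by rw [norm_sub_pos_iff]; exact hx
  set e := ε / (2 * ‖x - C‖) with he_def
  have he : 0 < e := div_pos hε (by positivity)
  have hx' : x + e • (x - C) ∈ convexHull ℝ ({A, B, C} : Set (EuclideanSpace ℝ (Fin 2))) := by
    apply hts
    apply hball
    rw [Metric.mem_ball, dist_eq_norm, add_sub_cancel_left, norm_smul, Real.norm_eq_abs,
      abs_of_pos he, he_def]
    rw [show ε / (2 * ‖x - C‖) * ‖x - C‖ = ε/2 by field_simp]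
    linarith
  obtain ⟨wa, wb, hwa, hwb, hws, hweq⟩ := tri_coeff hx'
  have h1e : (0:ℝ) < 1 + e := by linarith
  refine ⟨wa/(1+e), wb/(1+e), div_nonneg hwa h1e.le, div_nonneg hwb h1e.le, ?_, ?_⟩
  · rw [← add_div, div_lt_one h1e]; linarith
  · have h2 : (1+e) • x = wa • A + wb • B + ((1 - wa - wb) + e) • C := by
      rw [show (1+e) • x = (x + e • (x - C)) + e • C by module, hweq]
      module
    have h4 : (1+e) • x
        = (1+e) • ((wa/(1+e)) • A + (wb/(1+e)) • B + (1 - wa/(1+e) - wb/(1+e)) • C) := by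
      rw [h2]
      match_scalars <;> field_simp <;> ring
    exact smul_right_injective _ h1e.ne' h4

theorem stmt8 (k : ℤ) (hk : 14 ≤ k) (P : Finset (EuclideanSpace ℝ (Fin 2)))
    (C A B : EuclideanSpace ℝ (Fin 2)) (hang : ∠ A C B ≤ 2 * π / k)
    (S : Set (EuclideanSpace ℝ (Fin 2)))
    (hS : S = {A, B} ∪ {X | X ∈ P ∧
      X ∈ interior (convexHull ℝ ({A, B, C} : Set (EuclideanSpace ℝ (Fin 2))))})
    (hshort : ∀ X ∈ S, dist C A ≤ dist C X)
    (s : ℕ) (N : Fin (s + 1) → EuclideanSpace ℝ (Fin 2))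
    (hN0 : N 0 = A) (hNs : N (Fin.last s) = B) (hinj : Function.Injective N)
    (hvert : Set.range N = Set.extremePoints ℝ (convexHull ℝ S))
    (horder : ∀ i j : Fin (s + 1), i ≤ j → ∠ A C (N i) ≤ ∠ A C (N j)) :
    ∀ i : Fin s, dist C (N i.castSucc) ≤ dist C (N i.succ) := by
  intro i
  have hAS : A ∈ S := by rw [hS]; exact Set.mem_union_left _ (by simp)
  have hBS : B ∈ S := by rw [hS]; exact Set.mem_union_left _ (by simp)
  have hNmem : ∀ j : Fin (s+1), N j ∈ S := fun j =>
    extremePoints_convexHull_subset (hvert ▸ Set.mem_range_self j)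
  by_cases hpA : N i.castSucc = A
  · rw [hpA]; exact hshort _ (hNmem i.succ)
  have hpB : N i.castSucc ≠ B := by
    intro h
    rw [← hNs] at h
    exact absurd (hinj h) (Fin.ne_of_lt (Fin.castSucc_lt_last i))
  have hqA : N i.succ ≠ A := by
    intro h
    rw [← hN0] at h
    exact Fin.succ_ne_zero i (hinj h)
  have hpI : N i.castSucc ∈ interior (convexHull ℝ
      ({A, B, C} : Set (EuclideanSpace ℝ (Fin 2)))) := by
    have hm := hNmem i.castSucc
    rw [hS] at hm
    rcases hm with hm | hm
    · simp only [Set.mem_insert_iff, Set.mem_singleton_iff] at hm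
      rcases hm with hm | hm
      · exact absurd hm hpA
      · exact absurd hm hpB
    · exact hm.2
  by_contra hlt
  push_neg at hlt
  by_cases hqB : N i.succ = B
  · obtain ⟨z, hz, hle⟩ := (convexOn_dist C (convex_convexHull ℝ
        ({A, B, C} : Set (EuclideanSpace ℝ (Fin 2))))).exists_ge_of_mem_convexHull
      (subset_convexHull ℝ ({A, B, C} : Set (EuclideanSpace ℝ (Fin 2)))) (interior_subset hpI)
    have hAB' : dist C A ≤ dist C B := hshort B hBS
    rw [hqB] at hlt
    simp only [Set.mem_insert_iff, Set.mem_singleton_iff] at hz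
    rcases hz with h | h | h
    · rw [h, dist_comm (N i.castSucc) C, dist_comm A C] at hle
      linarith
    · rw [h, dist_comm (N i.castSucc) C, dist_comm B C] at hle
      linarith
    · rw [h, dist_comm (N i.castSucc) C, dist_self] at hle
      linarith [dist_nonneg (x := C) (y := B)]
  have hqI : N i.succ ∈ interior (convexHull ℝ
      ({A, B, C} : Set (EuclideanSpace ℝ (Fin 2)))) := by
    have hm := hNmem i.succ
    rw [hS] at hm
    rcases hm with hm | hm
    · simp only [Set.mem_insert_iff, Set.mem_singleton_iff] at hm
      rcases hm with hm | hm
      · exact absurd hm hqA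
      · exact absurd hm hqB
    · exact hm.2
  -- nondegeneracy
  have htop : affineSpan ℝ ({A, B, C} : Set (EuclideanSpace ℝ (Fin 2))) = ⊤ := by
    have h1 : (interior (convexHull ℝ ({A, B, C} : Set (EuclideanSpace ℝ (Fin 2))))).Nonempty :=
      ⟨_, hpI⟩
    have h2 := (convex_convexHull ℝ _).interior_nonempty_iff_affineSpan_eq_top.mp h1
    rwa [affineSpan_convexHull] at h2
  have hncol : ¬ Collinear ℝ ({A, B, C} : Set (EuclideanSpace ℝ (Fin 2))) := by
    intro hc
    have h1 : vectorSpan ℝ ({A, B, C} : Set (EuclideanSpace ℝ (Fin 2))) = ⊤ := by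
      rw [← direction_affineSpan, htop]
      exact AffineSubspace.direction_top ℝ _ _
    have h2 := hc.finrank_le_one
    rw [h1, finrank_top, finrank_euclideanSpace_fin] at h2
    norm_num at h2
  have hAC : A ≠ C := by
    rintro rfl
    apply hncol
    refine (collinear_pair ℝ A B).subset ?_
    intro z hz
    simp only [Set.mem_insert_iff, Set.mem_singleton_iff] at hz ⊢
    tauto
  have hra0 : (0:ℝ) < ‖A - C‖ := by rw [norm_sub_pos_iff]; exact hAC
  have hdCA : dist C A = ‖A - C‖ := by rw [dist_comm, dist_eq_norm]
  have hrq_ge : ‖A - C‖ ≤ ‖N i.succ - C‖ := by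
    have h := hshort (N i.succ) (hNmem i.succ)
    rwa [hdCA, dist_comm, dist_eq_norm] at h
  have hrq0 : (0:ℝ) < ‖N i.succ - C‖ := lt_of_lt_of_le hra0 hrq_ge
  have hpq : ‖N i.succ - C‖ < ‖N i.castSucc - C‖ := by
    rw [dist_comm C, dist_comm C, dist_eq_norm, dist_eq_norm] at hlt
    exact hlt
  have hrp0 : (0:ℝ) < ‖N i.castSucc - C‖ := hrq0.trans hpq
  have hqC : N i.succ ≠ C := by
    intro h
    rw [h] at hrq0
    simp at hrq0
  -- coefficients
  obtain ⟨a1, b1, ha1, hb1, hs1, hpeq⟩ := tri_coeff (interior_subset hpI)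
  obtain ⟨a2, b2, ha2, hb2, hs2, hqeq⟩ := interior_coeff hqI hqC
  have hvp : N i.castSucc - C = a1 • (A - C) + b1 • (B - C) := by rw [hpeq]; module
  have hvq : N i.succ - C = a2 • (A - C) + b2 • (B - C) := by rw [hqeq]; module
  -- inner product facts
  have hip : ⟪A - C, N i.castSucc - C⟫ = a1 * ‖A - C‖^2 + b1 * ⟪A - C, B - C⟫ := by
    rw [hvp, inner_add_right, real_inner_smul_right, real_inner_smul_right,
      real_inner_self_eq_norm_sq]
  have hiq : ⟪A - C, N i.succ - C⟫ = a2 * ‖A - C‖^2 + b2 * ⟪A - C, B - C⟫ := by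
    rw [hvq, inner_add_right, real_inner_smul_right, real_inner_smul_right,
      real_inner_self_eq_norm_sq]
  have hrp2 : ‖N i.castSucc - C‖^2
      = a1^2*‖A - C‖^2 + 2*a1*b1*⟪A - C, B - C⟫ + b1^2*‖B - C‖^2 := by
    rw [show ‖N i.castSucc - C‖^2 = ⟪N i.castSucc - C, N i.castSucc - C⟫ from
      (real_inner_self_eq_norm_sq _).symm, hvp]
    simp only [real_inner_add_add_self, real_inner_smul_left, real_inner_smul_right]
    rw [real_inner_self_eq_norm_sq, real_inner_self_eq_norm_sq]
    ring
  have hrq2 : ‖N i.succ - C‖^2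
      = a2^2*‖A - C‖^2 + 2*a2*b2*⟪A - C, B - C⟫ + b2^2*‖B - C‖^2 := by
    rw [show ‖N i.succ - C‖^2 = ⟪N i.succ - C, N i.succ - C⟫ from
      (real_inner_self_eq_norm_sq _).symm, hvq]
    simp only [real_inner_add_add_self, real_inner_smul_left, real_inner_smul_right]
    rw [real_inner_self_eq_norm_sq, real_inner_self_eq_norm_sq]
    ring
  -- Sv nonneg
  have hSv : (0:ℝ) ≤ ⟪A - C, B - C⟫ := by
    have hk14 : (14:ℝ) ≤ (k:ℝ) := by exact_mod_cast hk
    have hkpos : (0:ℝ) < (k:ℝ) := by linarith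
    have hang2 : ∠ A C B ≤ π/2 := by
      refine hang.trans ?_
      have h1 : 2*π/(k:ℝ) ≤ 2*π/14 :=
        div_le_div_of_nonneg_left (by positivity) (by norm_num) hk14
      nlinarith [Real.pi_pos]
    have hcos : 0 ≤ Real.cos (∠ A C B) :=
      Real.cos_nonneg_of_mem_Icc ⟨by linarith [EuclideanGeometry.angle_nonneg A C B,
        Real.pi_pos], hang2⟩
    have hm := InnerProductGeometry.cos_angle_mul_norm_mul_norm (A - C) (B - C)
    have hdef : ∠ A C B = InnerProductGeometry.angle (A - C) (B - C) := rfl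
    rw [← hdef] at hm
    rw [← hm]
    exact mul_nonneg hcos (mul_nonneg (norm_nonneg _) (norm_nonneg _))
  -- strict Cauchy-Schwarz
  have hcs : ⟪A - C, B - C⟫^2 < ‖A - C‖^2 * ‖B - C‖^2 := by
    have hle : ⟪A - C, B - C⟫ ≤ ‖A - C‖ * ‖B - C‖ := real_inner_le_norm _ _
    have hne : ⟪A - C, B - C⟫ ≠ ‖A - C‖ * ‖B - C‖ := by
      intro h
      have h2 := inner_eq_norm_mul_iff_real.mp h
      apply hncol
      rw [collinear_iff_exists_forall_eq_smul_vadd]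
      refine ⟨C, A - C, ?_⟩
      intro z hz
      simp only [Set.mem_insert_iff, Set.mem_singleton_iff] at hz
      rcases hz with rfl | rfl | rfl
      · exact ⟨1, by simp⟩
      · refine ⟨‖z - C‖/‖A - C‖, ?_⟩
        have h5 : (‖z - C‖/‖A - C‖) • (A - C) = z - C := by
          rw [div_eq_inv_mul, mul_smul, h2, smul_smul, inv_mul_cancel₀ hra0.ne', one_smul]
        simp [h5]
      · exact ⟨0, by simp⟩
    nlinarith [lt_of_le_of_ne hle hne, hSv, mul_nonneg (norm_nonneg (A - C)) (norm_nonneg (B - C))]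
  -- angle monotonicity gives h3
  have hcos_le : Real.cos (∠ A C (N i.succ)) ≤ Real.cos (∠ A C (N i.castSucc)) :=
    Real.cos_le_cos_of_nonneg_of_le_pi (EuclideanGeometry.angle_nonneg _ _ _)
      (EuclideanGeometry.angle_le_pi _ _ _) (horder i.castSucc i.succ (Fin.castSucc_lt_succ : i.castSucc < i.succ).le)
  have hcosp : Real.cos (∠ A C (N i.castSucc))
      = ⟪A - C, N i.castSucc - C⟫ / (‖A - C‖ * ‖N i.castSucc - C‖) :=
    InnerProductGeometry.cos_angle _ _
  have hcosq : Real.cos (∠ A C (N i.succ))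
      = ⟪A - C, N i.succ - C⟫ / (‖A - C‖ * ‖N i.succ - C‖) :=
    InnerProductGeometry.cos_angle _ _
  have h3 : ⟪A - C, N i.succ - C⟫ * ‖N i.castSucc - C‖
      ≤ ⟪A - C, N i.castSucc - C⟫ * ‖N i.succ - C‖ := by
    rw [hcosp, hcosq, div_le_div_iff₀ (by positivity) (by positivity)] at hcos_le
    have h4 : ‖A - C‖ * (⟪A - C, N i.succ - C⟫ * ‖N i.castSucc - C‖)
        ≤ ‖A - C‖ * (⟪A - C, N i.castSucc - C⟫ * ‖N i.succ - C‖) := by linarith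
    exact le_of_mul_le_mul_left h4 hra0
  -- main inequality
  obtain ⟨l, mu, nu, hl, hmu, hnu, hsum, ha1eq, hb1eq⟩ :=
    coeff_main hra0 hSv hcs ha1 hb1 hs1 ha2 hb2 hs2 hrq_ge hpq.le hrp2 hrq2
      (by rw [← hip, ← hiq]; exact h3)
  have hcomb : N i.castSucc = l • A + mu • (N i.succ) + nu • B := by
    rw [hpeq, hqeq, ha1eq, hb1eq]
    match_scalars
    · ring
    · ring
    · linear_combination -hsum
  have hmemT : N i.castSucc ∈ convexHull ℝ ({A, N i.succ, B} : Set (EuclideanSpace ℝ (Fin 2))) := by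
    rw [hcomb]
    exact comb_mem hl hmu hnu hsum
  have hsub : convexHull ℝ ({A, N i.succ, B} : Set (EuclideanSpace ℝ (Fin 2)))
      ⊆ convexHull ℝ S := by
    apply convexHull_min _ (convex_convexHull ℝ S)
    intro z hz
    simp only [Set.mem_insert_iff, Set.mem_singleton_iff] at hz
    rcases hz with rfl | rfl | rfl
    · exact subset_convexHull ℝ S hAS
    · exact subset_convexHull ℝ S (hNmem i.succ)
    · exact subset_convexHull ℝ S hBS
  have hrange : N i.castSucc ∈ Set.extremePoints ℝ (convexHull ℝ S) := by
    rw [← hvert]; exact Set.mem_range_self _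
  have hext := inter_extremePoints_subset_extremePoints_of_subset hsub ⟨hmemT, hrange⟩
  have hfin := extremePoints_convexHull_subset hext
  simp only [Set.mem_insert_iff, Set.mem_singleton_iff] at hfin
  rcases hfin with h | h | h
  · exact hpA h
  · exact absurd (hinj h) (Fin.ne_of_lt (Fin.castSucc_lt_succ : i.castSucc < i.succ))
  · exact hpB h
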